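/- arXiv:2503.09246 — 2 statements merged into one kernel-verified Lean document; each statement's English description precedes it below -/
import Mathlib

section
/- Let w be a Ramsey witness on ℕ × ℕ. Then: (1) the image of w under the map (a, b) ↦ a·b is different from the image of w under the map (a, b) ↦ a^b; and (2) the image of w under the map (a, b) ↦ a^b is different from the image of w under the map (a, b) ↦ b^a (all as ultrafilters on ℕ). -/
/-- An ultrafilter on `ℕ × ℕ` is a Ramsey witness if every member contains `[H]²`
for some infinite `H ⊆ ℕ`. -/
def IsRamseyWitness (w : Ultrafilter (ℕ × ℕ)) : Prop :=
  ∀ A ∈ w, ∃ H : Set ℕ, H.Infinite ∧ ∀ h₁ ∈ H, ∀ h₂ ∈ H, h₁ < h₂ → (h₁, h₂) ∈ A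

namespace RWAux


lemma umem_inter {α : Type*} {u : Ultrafilter α} {s t : Set α}
    (h1 : s ∈ u) (h2 : t ∈ u) : s ∩ t ∈ u :=
  Ultrafilter.mem_coe.mp (Filter.inter_mem (Ultrafilter.mem_coe.mpr h1)
    (Ultrafilter.mem_coe.mpr h2))

lemma umem_super {α : Type*} {u : Ultrafilter α} {s t : Set α}
    (h1 : s ∈ u) (h : s ⊆ t) : t ∈ u :=
  Ultrafilter.mem_coe.mp (Filter.mem_of_superset (Ultrafilter.mem_coe.mpr h1) h)

/-- Descent depth of `x` under `f` (stops when `f` no longer decreases). -/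
def desc (f : ℕ → ℕ) (x : ℕ) : ℕ :=
  if h : f x < x then desc f (f x) + 1 else 0
termination_by x
decreasing_by exact h

lemma desc_eq {f : ℕ → ℕ} {x : ℕ} (h : f x < x) : desc f x = desc f (f x) + 1 := by
  rw [desc, dif_pos h]

/-- An ultrafilter is not invariant under a map that decreases a.e. -/
lemma no_fixed (u : Ultrafilter ℕ) (f : ℕ → ℕ)
    (hmap : u.map f = u) (hlt : {x | f x < x} ∈ u) : False := by
  have hpre : ∀ s : Set ℕ, s ∈ u → f ⁻¹' s ∈ u := by
    intro s hs
    have : s ∈ u.map f := by rw [hmap]; exact hs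
    exact Ultrafilter.mem_map.mp this
  rcases u.mem_or_compl_mem {x | Even (desc f x)} with hE | hE
  · obtain ⟨x, hx⟩ := Ultrafilter.nonempty_of_mem
      (umem_inter (umem_inter hE (hpre _ hE)) hlt)
    obtain ⟨⟨h1, h2⟩, h3⟩ := hx
    have := desc_eq (f := f) h3
    simp only [Set.mem_setOf_eq, Set.mem_preimage] at h1 h2
    rw [this, Nat.even_add_one] at h1
    exact h1 h2
  · obtain ⟨x, hx⟩ := Ultrafilter.nonempty_of_mem
      (umem_inter (umem_inter hE (hpre _ hE)) hlt)
    obtain ⟨⟨h1, h2⟩, h3⟩ := hx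
    have := desc_eq (f := f) h3
    simp only [Set.mem_compl_iff, Set.mem_setOf_eq, Set.mem_preimage] at h1 h2
    rw [this, Nat.even_add_one] at h1
    exact h2 (not_not.mp h1)

/-- Any set of pairs that meets `[H]²` for every infinite `H` belongs to a
Ramsey witness. -/
lemma mem_of_pairs {w : Ultrafilter (ℕ × ℕ)} (hw : IsRamseyWitness w)
    (P : Set (ℕ × ℕ))
    (h : ∀ H : Set ℕ, H.Infinite → ∃ h₁ ∈ H, ∃ h₂ ∈ H, h₁ < h₂ ∧ (h₁, h₂) ∈ P) :
    P ∈ w := by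
  rcases w.mem_or_compl_mem P with h1 | h1
  · exact h1
  · exfalso
    obtain ⟨H, hinf, hH⟩ := hw _ h1
    obtain ⟨a, ha, b, hb, hab, hP⟩ := h H hinf
    exact (hH a ha b hb hab) hP

lemma umap_congr {α β : Type*} (u : Ultrafilter α) {f g : α → β}
    (h : {x | f x = g x} ∈ u) : u.map f = u.map g := by
  apply Ultrafilter.coe_injective
  rw [Ultrafilter.coe_map, Ultrafilter.coe_map]
  exact Filter.map_congr h

lemma split01 (u : Ultrafilter (ℕ × ℕ)) (F G : ℕ × ℕ → ℕ)
    (h : {p | F p = G p ∨ F p = G p + 1} ∈ u) :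
    ∃ c, c ≤ 1 ∧ {p | F p = G p + c} ∈ u := by
  rcases u.mem_or_compl_mem {p | F p = G p} with h0 | h0
  · exact ⟨0, by norm_num, by simpa using h0⟩
  · refine ⟨1, le_refl 1, ?_⟩
    refine umem_super (umem_inter h h0) ?_
    rintro p ⟨hp, hnp⟩
    simp only [Set.mem_compl_iff, Set.mem_setOf_eq] at hp hnp ⊢
    tauto

/-! ### Arithmetic facts about `Nat.log 2` -/

local notation "lg" => Nat.log 2

lemma succ_lt_two_pow {k : ℕ} (hk : 3 ≤ k) : k + 1 < 2 ^ k := by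
  induction k with
  | zero => omega
  | succ n ih =>
    rcases Nat.lt_or_ge n 3 with h | h
    · interval_cases n <;> first | omega | norm_num
    · have h1 := ih h
      have h4 : 2 ^ n ≥ 4 := by
        calc 4 = 2 ^ 2 := by norm_num
        _ ≤ 2 ^ n := Nat.pow_le_pow_right (by norm_num) (by omega)
      have h2 : 2 ^ (n + 1) = 2 ^ n + 2 ^ n := by ring
      omega

lemma lg_add_one_lt {x : ℕ} (hx : 8 ≤ x) : lg x + 1 < x := by
  have h1 : 2 ^ lg x ≤ x := Nat.pow_log_le_self 2 (by omega)
  have h3 : 3 ≤ lg x := by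
    have : (2:ℕ) ^ 3 ≤ x := by norm_num; omega
    exact (Nat.le_log_iff_pow_le (by norm_num) (by omega)).mpr this
  exact lt_of_lt_of_le (succ_lt_two_pow h3) h1

lemma le_lg_mul {a b : ℕ} (ha : 1 ≤ a) (hb : 1 ≤ b) :
    lg a + lg b ≤ lg (a * b) := by
  have h : 2 ^ (lg a + lg b) ≤ a * b := by
    rw [pow_add]
    exact Nat.mul_le_mul (Nat.pow_log_le_self 2 (by omega))
      (Nat.pow_log_le_self 2 (by omega))
  exact (Nat.le_log_iff_pow_le (by norm_num) (by positivity)).mpr h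

lemma lg_mul_le {a b : ℕ} (ha : 1 ≤ a) (hb : 1 ≤ b) :
    lg (a * b) ≤ lg a + lg b + 1 := by
  have h : a * b < 2 ^ (lg a + lg b + 2) := by
    have h1 : a < 2 ^ (lg a + 1) := Nat.lt_pow_succ_log_self (by norm_num) a
    have h2 : b < 2 ^ (lg b + 1) := Nat.lt_pow_succ_log_self (by norm_num) b
    calc a * b < 2 ^ (lg a + 1) * 2 ^ (lg b + 1) :=
          Nat.mul_lt_mul_of_lt_of_lt h1 h2
    _ = 2 ^ (lg a + lg b + 2) := by rw [← pow_add]; ring_nf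
  have := Nat.log_lt_of_lt_pow (mul_ne_zero (by omega) (by omega) : a * b ≠ 0) h
  omega

lemma lg_two_mul_le {x : ℕ} (hx : 1 ≤ x) : lg (2 * x) ≤ lg x + 1 := by
  have h : 2 * x < 2 ^ (lg x + 2) := by
    have := Nat.lt_pow_succ_log_self (b := 2) (by norm_num) x
    have h2 : 2 ^ (lg x + 2) = 2 * 2 ^ (lg x + 1) := by ring
    omega
  have := Nat.log_lt_of_lt_pow (by omega : 2 * x ≠ 0) h
  omega

lemma le_lg_pow {a b : ℕ} (ha : 1 ≤ a) : b * lg a ≤ lg (a ^ b) := by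
  rcases Nat.eq_zero_or_pos b with rfl | hb
  · simp
  have h : 2 ^ (b * lg a) ≤ a ^ b := by
    rw [mul_comm, pow_mul]
    exact Nat.pow_le_pow_left (Nat.pow_log_le_self 2 (by omega)) b
  exact (Nat.le_log_iff_pow_le (by norm_num) (by positivity)).mpr h

lemma lg_pow_le {a b : ℕ} (ha : 1 ≤ a) (hb : 1 ≤ b) :
    lg (a ^ b) ≤ b * lg a + b := by
  have h : a ^ b < 2 ^ (b * (lg a + 1)) := by
    rw [mul_comm, pow_mul]
    exact Nat.pow_lt_pow_left (Nat.lt_pow_succ_log_self (by norm_num) a) (by omega)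
  have := Nat.log_lt_of_lt_pow (pow_ne_zero b (by omega) : a ^ b ≠ 0) h
  nlinarith [this]

/-- `x ≤ 2 * lg b` implies `lg x ≤ lg (lg b) + 1` (for `lg b ≥ 1`). -/
lemma lg_le_of_le_two_mul {x b : ℕ} (hb : 1 ≤ lg b) (h : x ≤ 2 * lg b + 1) :
    lg x ≤ lg (lg b) + 1 := by
  rcases Nat.eq_zero_or_pos x with rfl | hx
  · simp
  have h2 : x < 2 ^ (lg (lg b) + 2) := by
    have h4 := Nat.lt_pow_succ_log_self (b := 2) (by norm_num) (lg b)
    have h3 : 2 ^ (lg (lg b) + 2) = 2 * 2 ^ (lg (lg b) + 1) := by ring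
    omega
  have := Nat.log_lt_of_lt_pow (by omega : x ≠ 0) h2
  omega

/-! ### The three pointwise computations -/

/-- `lg³(a*b) ∈ {lg³ b, lg³ b + 1}`. -/
lemma C1 {a b : ℕ} (ha : 2 ≤ a) (hab : a ≤ b) :
    lg (lg (lg (a * b))) = lg (lg (lg b)) ∨
    lg (lg (lg (a * b))) = lg (lg (lg b)) + 1 := by
  have ha1 : 1 ≤ a := by omega
  have hb1 : 1 ≤ b := by omega
  have hla : lg a ≤ lg b := Nat.log_mono_right hab
  -- level 1
  have h1 : lg b ≤ lg (a * b) := Nat.log_mono_right (Nat.le_mul_of_pos_left b (by omega))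
  have h2 : lg (a * b) ≤ 2 * lg b + 1 := by
    have := lg_mul_le ha1 hb1; omega
  -- level 2
  have h3 : lg (lg b) ≤ lg (lg (a * b)) := Nat.log_mono_right h1
  have hlb1 : 1 ≤ lg b := by
    have : (2:ℕ) ^ 1 ≤ b := by omega
    exact (Nat.le_log_iff_pow_le (by norm_num) (by omega)).mpr this
  have h4 : lg (lg (a * b)) ≤ lg (lg b) + 1 := by
    apply lg_le_of_le_two_mul hlb1; omega
  -- level 3
  have h5 : lg (lg (lg b)) ≤ lg (lg (lg (a * b))) := Nat.log_mono_right h3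
  have h6 : lg (lg (lg (a * b))) ≤ lg (lg (lg b)) + 1 := by
    rcases Nat.eq_zero_or_pos (lg (lg (a*b))) with h0 | hp
    · rw [h0]; simp
    have h7 : lg (lg (a * b)) < 2 ^ (lg (lg (lg b)) + 2) := by
      have := Nat.lt_pow_succ_log_self (b := 2) (by norm_num) (lg (lg b))
      have h8 : 2 ^ (lg (lg (lg b)) + 2) = 2 * 2 ^ (lg (lg (lg b)) + 1) := by ring
      omega
    have := Nat.log_lt_of_lt_pow (by omega : lg (lg (a*b)) ≠ 0) h7
    omega
  omega

/-- `lg³(a^b) ∈ {lg² b, lg² b + 1}` when `lg (lg a) + 3 ≤ lg b`. -/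
lemma C2 {a b : ℕ} (ha : 2 ≤ a) (hb : 2 ≤ b)
    (hKey : lg (lg a) + 3 ≤ lg b) :
    lg (lg (lg (a ^ b))) = lg (lg b) ∨
    lg (lg (lg (a ^ b))) = lg (lg b) + 1 := by
  have ha1 : 1 ≤ a := by omega
  have hb1 : 1 ≤ b := by omega
  have hla : 1 ≤ lg a := by
    have : (2:ℕ) ^ 1 ≤ a := by omega
    exact (Nat.le_log_iff_pow_le (by norm_num) (by omega)).mpr this
  have hlb : 1 ≤ lg b := by omega
  -- level 1
  have t1 : b * lg a ≤ lg (a ^ b) := le_lg_pow ha1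
  have t1' : lg (a ^ b) ≤ 2 * (b * lg a) := by
    have := lg_pow_le ha1 hb1
    nlinarith
  -- level 2
  have t2 : lg b + lg (lg a) ≤ lg (lg (a ^ b)) := by
    calc lg b + lg (lg a) ≤ lg (b * lg a) := le_lg_mul hb1 hla
    _ ≤ lg (lg (a ^ b)) := Nat.log_mono_right t1
  have t3 : lg (lg (a ^ b)) ≤ lg b + lg (lg a) + 2 := by
    have h1 : lg (lg (a ^ b)) ≤ lg (2 * (b * lg a)) := Nat.log_mono_right t1'
    have h2 : lg (2 * (b * lg a)) ≤ lg (b * lg a) + 1 :=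
      lg_two_mul_le (Nat.mul_pos (by omega) hla)
    have h3 : lg (b * lg a) ≤ lg b + lg (lg a) + 1 := lg_mul_le hb1 hla
    omega
  -- level 3
  have t4 : lg (lg b) ≤ lg (lg (lg (a ^ b))) := by
    have : lg b ≤ lg (lg (a ^ b)) := by omega
    exact Nat.log_mono_right this
  have t5 : lg (lg (lg (a ^ b))) ≤ lg (lg b) + 1 := by
    apply lg_le_of_le_two_mul hlb; omega
  omega

/-- `lg³(b^a) ∈ {lg³ b, lg³ b + 1}` when `lg a + 3 ≤ lg (lg b)`. -/
lemma C3 {a b : ℕ} (ha : 2 ≤ a) (hb : 2 ≤ b)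
    (hKey : lg a + 3 ≤ lg (lg b)) :
    lg (lg (lg (b ^ a))) = lg (lg (lg b)) ∨
    lg (lg (lg (b ^ a))) = lg (lg (lg b)) + 1 := by
  have ha1 : 1 ≤ a := by omega
  have hb1 : 1 ≤ b := by omega
  have hla : 1 ≤ lg a := by
    have : (2:ℕ) ^ 1 ≤ a := by omega
    exact (Nat.le_log_iff_pow_le (by norm_num) (by omega)).mpr this
  have hlb : 1 ≤ lg b := by
    have : (2:ℕ) ^ 1 ≤ b := by omega
    exact (Nat.le_log_iff_pow_le (by norm_num) (by omega)).mpr this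
  have hllb : 1 ≤ lg (lg b) := by omega
  -- level 1
  have r1 : a * lg b ≤ lg (b ^ a) := le_lg_pow hb1
  have r1' : lg (b ^ a) ≤ 2 * (a * lg b) := by
    have := lg_pow_le hb1 ha1
    nlinarith
  -- level 2
  have r2 : lg a + lg (lg b) ≤ lg (lg (b ^ a)) := by
    calc lg a + lg (lg b) ≤ lg (a * lg b) := le_lg_mul ha1 hlb
    _ ≤ lg (lg (b ^ a)) := Nat.log_mono_right r1
  have r3 : lg (lg (b ^ a)) ≤ lg a + lg (lg b) + 2 := by
    have h1 : lg (lg (b ^ a)) ≤ lg (2 * (a * lg b)) := Nat.log_mono_right r1'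
    have h2 : lg (2 * (a * lg b)) ≤ lg (a * lg b) + 1 :=
      lg_two_mul_le (Nat.mul_pos (by omega) hlb)
    have h3 : lg (a * lg b) ≤ lg a + lg (lg b) + 1 := lg_mul_le ha1 hlb
    omega
  -- level 3
  have r4 : lg (lg (lg b)) ≤ lg (lg (lg (b ^ a))) := by
    have : lg (lg b) ≤ lg (lg (b ^ a)) := by omega
    exact Nat.log_mono_right this
  have r5 : lg (lg (lg (b ^ a))) ≤ lg (lg (lg b)) + 1 := by
    rcases Nat.eq_zero_or_pos (lg (lg (b ^ a))) with h0 | hp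
    · omega
    have h7 : lg (lg (b ^ a)) < 2 ^ (lg (lg (lg b)) + 2) := by
      have := Nat.lt_pow_succ_log_self (b := 2) (by norm_num) (lg (lg b))
      have h8 : 2 ^ (lg (lg (lg b)) + 2) = 2 * 2 ^ (lg (lg (lg b)) + 1) := by ring
      omega
    have := Nat.log_lt_of_lt_pow (by omega : lg (lg (b ^ a)) ≠ 0) h7
    omega
  omega

/-! ### The final contradiction -/

lemma final (w : Ultrafilter (ℕ × ℕ)) (c c' : ℕ) (hc' : c' ≤ 1)
    (h8 : {p : ℕ × ℕ | 8 ≤ lg (lg p.2)} ∈ w)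
    (heq : w.map (fun p => lg (lg p.2) + c)
         = w.map (fun p => lg (lg (lg p.2)) + c')) : False := by
  have h2 : w.map (fun p => lg (lg p.2))
      = w.map (fun p => lg (lg (lg p.2)) + c' - c) := by
    have h3 := congrArg (Ultrafilter.map (fun x => x - c)) heq
    rw [Ultrafilter.map_map, Ultrafilter.map_map] at h3
    have h4 : ((fun x => x - c) ∘ fun p : ℕ × ℕ => lg (lg p.2) + c)
        = fun p : ℕ × ℕ => lg (lg p.2) := by
      funext p; simp
    rw [h4] at h3
    exact h3
  set u' := w.map (fun p : ℕ × ℕ => lg (lg p.2)) with hu'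
  have h5 : u'.map (fun x => lg x + c' - c) = u' := by
    rw [hu', Ultrafilter.map_map]
    exact h2.symm
  apply no_fixed u' (fun x => lg x + c' - c) h5
  rw [hu', Ultrafilter.mem_map]
  refine umem_super h8 ?_
  intro p hp
  simp only [Set.mem_setOf_eq, Set.mem_preimage] at hp ⊢
  have := lg_add_one_lt hp
  omega

/-- The threshold function. -/
def T (a : ℕ) : ℕ := 2 ^ 2 ^ (lg a + lg (lg a) + 8)

def P : Set (ℕ × ℕ) := {p | 2 ≤ p.1 ∧ p.1 < p.2 ∧ T p.1 < p.2}

lemma P_mem {w : Ultrafilter (ℕ × ℕ)} (hw : IsRamseyWitness w) : P ∈ w := by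
  apply mem_of_pairs hw
  intro H hinf
  obtain ⟨a, haH, ha⟩ := hinf.exists_gt 1
  obtain ⟨b, hbH, hb⟩ := hinf.exists_gt (max a (T a))
  refine ⟨a, haH, b, hbH, ?_, ?_⟩
  · exact lt_of_le_of_lt (le_max_left _ _) hb
  · exact ⟨by omega, lt_of_le_of_lt (le_max_left _ _) hb,
      lt_of_le_of_lt (le_max_right _ _) hb⟩

lemma P_props {a b : ℕ} (h : (a, b) ∈ P) :
    2 ≤ a ∧ 2 ≤ b ∧ a ≤ b ∧ lg (lg a) + 3 ≤ lg b ∧ lg a + 3 ≤ lg (lg b) ∧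
      8 ≤ lg (lg b) := by
  obtain ⟨ha, hab, hT⟩ := h
  have hb2 : 2 ≤ b := by omega
  set K := lg a + lg (lg a) + 8 with hK
  have h1 : (2:ℕ) ^ 2 ^ K ≤ b := le_of_lt hT
  have h2 : 2 ^ K ≤ lg b := by
    calc (2:ℕ) ^ K = lg (2 ^ 2 ^ K) := (Nat.log_pow (by norm_num) _).symm
    _ ≤ lg b := Nat.log_mono_right h1
  have h3 : K ≤ lg (lg b) := by
    calc K = lg (2 ^ K) := (Nat.log_pow (by norm_num) _).symm
    _ ≤ lg (lg b) := Nat.log_mono_right h2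
  have h4 : K ≤ 2 ^ K := le_of_lt (Nat.lt_two_pow_self (n := K))
  refine ⟨ha, hb2, le_of_lt hab, by omega, by omega, by omega⟩

end RWAux


open RWAux in
/-- No Ramsey witness identifies pairwise products with pairwise exponentials, nor
`a^b` with `b^a`. -/
theorem stmt_18 (w : Ultrafilter (ℕ × ℕ)) (hw : IsRamseyWitness w) :
    ((w.map fun p => p.1 * p.2) ≠ (w.map fun p => p.1 ^ p.2)) ∧
    ((w.map fun p => p.1 ^ p.2) ≠ (w.map fun p => p.2 ^ p.1)) := by
  have hP := P_mem hw
  have h8 : {p : ℕ × ℕ | 8 ≤ Nat.log 2 (Nat.log 2 p.2)} ∈ w := by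
    refine umem_super hP ?_
    rintro ⟨a, b⟩ hp
    exact (P_props hp).2.2.2.2.2
  -- the three constants
  obtain ⟨c₁, hc₁, hm₁⟩ := split01 w
      (fun p => Nat.log 2 (Nat.log 2 (Nat.log 2 (p.1 * p.2))))
      (fun p => Nat.log 2 (Nat.log 2 (Nat.log 2 p.2)))
      (umem_super hP (by
        rintro ⟨a, b⟩ hp
        obtain ⟨ha, hb, hab, _, _, _⟩ := P_props hp
        exact C1 ha hab))
  obtain ⟨c₂, hc₂, hm₂⟩ := split01 w
      (fun p => Nat.log 2 (Nat.log 2 (Nat.log 2 (p.1 ^ p.2))))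
      (fun p => Nat.log 2 (Nat.log 2 p.2))
      (umem_super hP (by
        rintro ⟨a, b⟩ hp
        obtain ⟨ha, hb, hab, hk1, _, _⟩ := P_props hp
        exact C2 ha hb hk1))
  obtain ⟨c₃, hc₃, hm₃⟩ := split01 w
      (fun p => Nat.log 2 (Nat.log 2 (Nat.log 2 (p.2 ^ p.1))))
      (fun p => Nat.log 2 (Nat.log 2 (Nat.log 2 p.2)))
      (umem_super hP (by
        rintro ⟨a, b⟩ hp
        obtain ⟨ha, hb, hab, _, hk2, _⟩ := P_props hp
        exact C3 ha hb hk2))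
  constructor
  · intro heq
    have h1 : w.map (fun p => Nat.log 2 (Nat.log 2 (Nat.log 2 (p.1 * p.2))))
        = w.map (fun p => Nat.log 2 (Nat.log 2 (Nat.log 2 (p.1 ^ p.2)))) := by
      have h := congrArg (Ultrafilter.map (Nat.log 2))
        (congrArg (Ultrafilter.map (Nat.log 2))
          (congrArg (Ultrafilter.map (Nat.log 2)) heq))
      rw [Ultrafilter.map_map, Ultrafilter.map_map, Ultrafilter.map_map,
        Ultrafilter.map_map, Ultrafilter.map_map, Ultrafilter.map_map] at h
      simpa [Function.comp_def] using h
    have h2 : w.map (fun p : ℕ × ℕ => Nat.log 2 (Nat.log 2 p.2) + c₂)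
        = w.map (fun p : ℕ × ℕ => Nat.log 2 (Nat.log 2 (Nat.log 2 p.2)) + c₁) := by
      calc w.map (fun p : ℕ × ℕ => Nat.log 2 (Nat.log 2 p.2) + c₂)
          = w.map (fun p => Nat.log 2 (Nat.log 2 (Nat.log 2 (p.1 ^ p.2)))) :=
            (umap_congr w hm₂).symm
        _ = w.map (fun p => Nat.log 2 (Nat.log 2 (Nat.log 2 (p.1 * p.2)))) := h1.symm
        _ = w.map (fun p : ℕ × ℕ => Nat.log 2 (Nat.log 2 (Nat.log 2 p.2)) + c₁) :=
            umap_congr w hm₁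
    exact final w c₂ c₁ hc₁ h8 h2
  · intro heq
    have h1 : w.map (fun p => Nat.log 2 (Nat.log 2 (Nat.log 2 (p.1 ^ p.2))))
        = w.map (fun p => Nat.log 2 (Nat.log 2 (Nat.log 2 (p.2 ^ p.1)))) := by
      have h := congrArg (Ultrafilter.map (Nat.log 2))
        (congrArg (Ultrafilter.map (Nat.log 2))
          (congrArg (Ultrafilter.map (Nat.log 2)) heq))
      rw [Ultrafilter.map_map, Ultrafilter.map_map, Ultrafilter.map_map,
        Ultrafilter.map_map, Ultrafilter.map_map, Ultrafilter.map_map] at h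
      simpa [Function.comp_def] using h
    have h2 : w.map (fun p : ℕ × ℕ => Nat.log 2 (Nat.log 2 p.2) + c₂)
        = w.map (fun p : ℕ × ℕ => Nat.log 2 (Nat.log 2 (Nat.log 2 p.2)) + c₃) := by
      calc w.map (fun p : ℕ × ℕ => Nat.log 2 (Nat.log 2 p.2) + c₂)
          = w.map (fun p => Nat.log 2 (Nat.log 2 (Nat.log 2 (p.1 ^ p.2)))) :=
            (umap_congr w hm₂).symm
        _ = w.map (fun p => Nat.log 2 (Nat.log 2 (Nat.log 2 (p.2 ^ p.1)))) := h1
        _ = w.map (fun p : ℕ × ℕ => Nat.log 2 (Nat.log 2 (Nat.log 2 p.2)) + c₃) :=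
            umap_congr w hm₃
    exact final w c₂ c₃ hc₃ h8 h2
end

section
/- Let f : ℕ → ℕ be arbitrary, let m ≥ 2 be a natural number, let d ≥ 1 be a natural number, and let g : ℕ × ℕ → ℕ and h₀, h₁ : ℕ → ℕ be such that for all a ≥ 1 and all b ≥ 1 one has 1 ≤ h₀(a), (h₀(a))^d · b ≤ (g(a, b))^d, and g(a, b) ≤ h₁(a) · b^d (i.e. h₀(a)·b^{1/d} ≤ g(a, b) ≤ h₁(a)·b^d). Then for every Ramsey witness w on ℕ × ℕ, the image of w under the map (a, b) ↦ f(a) · m^b is different from the image of w under g (as ultrafilters on ℕ). -/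
/-- Auxiliary tower of thresholds. -/
def rwAuxT (m K t0 : ℕ) : ℕ → ℕ
  | 0 => t0
  | j+1 => m ^ (rwAuxT m K t0 j / K)

lemma rw_two_pow_big (A : ℕ) : ∀ s, 2*A+2 ≤ s → A*(s+1) ≤ 2^s := by
  intro s hs
  induction s, hs using Nat.le_induction with
  | base =>
      have hA : A + 1 ≤ 2 ^ A := Nat.lt_two_pow_self (n := A)
      have h1 : (2:ℕ) ^ (2*A+2) = 4 * (2^A) * (2^A) := by
        rw [pow_add, two_mul, pow_add]; ring
      rw [h1]; nlinarith
  | succ n hn ih =>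
      have h1 : (2:ℕ) ^ (n+1) = 2 * 2^n := by rw [pow_succ]; ring
      rw [h1]; nlinarith

lemma rwAuxT_facts (m K t0 : ℕ) (hm : 2 ≤ m) (hK : 1 ≤ K)
    (ht0 : K*(2*(2*K*K*K)+2) ≤ t0) :
    ∀ j, t0 ≤ rwAuxT m K t0 j ∧
      2*K*K*(rwAuxT m K t0 j + 1) ≤ rwAuxT m K t0 (j+1) := by
  have hKpos : 0 < K := hK
  have key : ∀ t, t0 ≤ t → 2*K*K*(t+1) ≤ m ^ (t / K) := by
    intro t ht
    set A := 2*K*K*K with hA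
    have hs : 2*A+2 ≤ t / K := by
      rw [Nat.le_div_iff_mul_le hKpos]
      calc (2*A+2)*K = K*(2*A+2) := by ring
        _ ≤ t0 := ht0
        _ ≤ t := ht
    have h1 : A*(t/K+1) ≤ 2^(t/K) := rw_two_pow_big A _ hs
    have h2 : (2:ℕ)^(t/K) ≤ m^(t/K) := Nat.pow_le_pow_left hm _
    have hdm := Nat.div_add_mod t K
    have hmod : t % K < K := Nat.mod_lt _ hKpos
    have h3 : t + 1 ≤ K*(t/K) + K := by omega
    calc 2*K*K*(t+1) ≤ 2*K*K*(K*(t/K)+K) := Nat.mul_le_mul_left _ h3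
      _ = A*(t/K+1) := by rw [hA]; ring
      _ ≤ 2^(t/K) := h1
      _ ≤ m^(t/K) := h2
  intro j
  induction j with
  | zero => exact ⟨le_refl _, key t0 (le_refl _)⟩
  | succ j ih =>
      have h1 : t0 ≤ rwAuxT m K t0 (j+1) := by
        have h2 := ih.2
        have h3 : rwAuxT m K t0 j + 1 ≤ 2*K*K*(rwAuxT m K t0 j + 1) :=
          Nat.le_mul_of_pos_left _ (by positivity)
        omega
      exact ⟨h1, key _ h1⟩

lemma rw_level_eq (T : ℕ → ℕ) (hmono : ∀ j, T j < T (j+1)) {j n : ℕ}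
    (h1 : T j ≤ n) (h2 : n < T (j+1)) :
    Nat.findGreatest (fun k => T k ≤ n) n = j := by
  have hSM : StrictMono T := strictMono_nat_of_lt_succ hmono
  have hid : ∀ k, k ≤ T k := fun k => hSM.le_apply
  have hle : j ≤ Nat.findGreatest (fun k => T k ≤ n) n :=
    Nat.le_findGreatest ((hid j).trans h1) h1
  by_contra hne
  have hlt : j < Nat.findGreatest (fun k => T k ≤ n) n :=
    lt_of_le_of_ne hle (Ne.symm hne)
  have hgle : Nat.findGreatest (fun k => T k ≤ n) n ≤ n := Nat.findGreatest_le n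
  have hspec : T (Nat.findGreatest (fun k => T k ≤ n) n) ≤ n :=
    Nat.findGreatest_spec (P := fun k => T k ≤ n) (m := j) ((hid j).trans h1) h1
  have : T (j+1) ≤ T (Nat.findGreatest (fun k => T k ≤ n) n) := hSM.monotone hlt
  omega



/-- If `g(a,b)` is polynomially bounded above and below in `b` (uniformly via `h₁, h₀`),
then no Ramsey witness identifies `(a,b) ↦ f(a)·m^b` with `g`. -/
theorem stmt_19 (f : ℕ → ℕ) (m d : ℕ) (hm : 2 ≤ m) (hd : 1 ≤ d)
    (g : ℕ × ℕ → ℕ) (h₀ h₁ : ℕ → ℕ)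
    (hbounds : ∀ a b : ℕ, 1 ≤ a → 1 ≤ b →
      1 ≤ h₀ a ∧ (h₀ a) ^ d * b ≤ (g (a, b)) ^ d ∧ g (a, b) ≤ h₁ a * b ^ d)
    (w : Ultrafilter (ℕ × ℕ)) (hw : IsRamseyWitness w) :
    (w.map fun p => f p.1 * m ^ p.2) ≠ w.map g := by
  intro heq
  have hm1 : 1 < m := hm
  have hd0 : d ≠ 0 := by omega
  have winter : ∀ {S1 S2 : Set (ℕ × ℕ)}, S1 ∈ w → S2 ∈ w → S1 ∩ S2 ∈ w := by
    intro S1 S2 h1 h2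
    exact Ultrafilter.mem_coe.mp
      (Filter.inter_mem (Ultrafilter.mem_coe.mpr h1) (Ultrafilter.mem_coe.mpr h2))
  -- Step A : the region 1 ≤ a < b is in w
  have hA : {p : ℕ × ℕ | 1 ≤ p.1 ∧ p.1 < p.2} ∈ w := by
    by_contra hnot
    have hc : {p : ℕ × ℕ | 1 ≤ p.1 ∧ p.1 < p.2}ᶜ ∈ w :=
      Ultrafilter.compl_mem_iff_notMem.mpr hnot
    obtain ⟨H, Hinf, hP⟩ := hw _ hc
    obtain ⟨u, huH, hu⟩ := Hinf.exists_gt 0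
    obtain ⟨v, hvH, hv⟩ := Hinf.exists_gt u
    exact (hP u huH v hvH hv) ⟨by omega, hv⟩
  -- g is positive on the good region
  have hgpos : ∀ a b : ℕ, 1 ≤ a → 1 ≤ b → 1 ≤ g (a, b) := by
    intro a b ha hb
    obtain ⟨h0a, hlow, _⟩ := hbounds a b ha hb
    by_contra hg
    have hg0 : g (a, b) = 0 := by omega
    rw [hg0, zero_pow hd0] at hlow
    have h1 : 1 ≤ h₀ a ^ d * b :=
      Nat.one_le_iff_ne_zero.mpr (by positivity)
    omega
  by_cases hz : {p : ℕ × ℕ | f p.1 = 0} ∈ w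
  · -- degenerate case : image is principal at 0, impossible for g
    have hF0 : (fun p : ℕ × ℕ => f p.1 * m ^ p.2) ⁻¹' {0} ∈ w := by
      refine Ultrafilter.mem_coe.mp
        (Filter.mem_of_superset (Ultrafilter.mem_coe.mpr hz) ?_)
      intro p hp
      simp only [Set.mem_preimage, Set.mem_singleton_iff]
      simp only [Set.mem_setOf_eq] at hp
      simp [hp]
    have h0 : ({0} : Set ℕ) ∈ w.map (fun p : ℕ × ℕ => f p.1 * m ^ p.2) :=
      Ultrafilter.mem_map.mpr hF0
    rw [heq] at h0
    have hg0 : g ⁻¹' {0} ∈ w := Ultrafilter.mem_map.mp h0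
    obtain ⟨p, hp⟩ := Ultrafilter.nonempty_of_mem (winter hA hg0)
    obtain ⟨⟨hp1, hp2⟩, hp3⟩ := hp
    have hb1 : 1 ≤ p.2 := by omega
    have := hgpos p.1 p.2 hp1 hb1
    simp only [Set.mem_preimage, Set.mem_singleton_iff] at hp3
    rw [show ((p.1, p.2) : ℕ × ℕ) = p from rfl] at this
    omega
  · -- main case
    have hfz : {p : ℕ × ℕ | f p.1 = 0}ᶜ ∈ w := Ultrafilter.compl_mem_iff_notMem.mpr hz
    set K := d + 1 with hKdef
    have hK1 : 1 ≤ K := by omega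
    set t0 := K*(2*(2*K*K*K)+2) with ht0def
    set T := rwAuxT m K t0 with hTdef
    have hfacts : ∀ j, t0 ≤ T j ∧ 2*K*K*(T j + 1) ≤ T (j+1) :=
      rwAuxT_facts m K t0 hm hK1 (le_refl _)
    have hmono : ∀ j, T j < T (j+1) := by
      intro j
      have h2 := (hfacts j).2
      have h3 : T j + 1 ≤ 2*K*K*(T j + 1) :=
        Nat.le_mul_of_pos_left _
          (Nat.mul_pos (Nat.mul_pos (by omega) (by omega : 0 < K)) (by omega : 0 < K))
      omega
    have hSM : StrictMono T := strictMono_nat_of_lt_succ hmono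
    set lev : ℕ → ℕ := fun n => Nat.findGreatest (fun k => T k ≤ n) n % 3 with hlevdef
    -- choose the colour i realised by the common image ultrafilter
    have hexists : ∃ i, (fun p : ℕ × ℕ => Nat.log m (f p.1 * m ^ p.2)) ⁻¹' (lev ⁻¹' {i}) ∈ w := by
      by_contra hno
      push_neg at hno
      have h0 := Ultrafilter.compl_mem_iff_notMem.mpr (hno 0)
      have h1 := Ultrafilter.compl_mem_iff_notMem.mpr (hno 1)
      have h2 := Ultrafilter.compl_mem_iff_notMem.mpr (hno 2)
      obtain ⟨p, hp⟩ := Ultrafilter.nonempty_of_mem (winter (winter h0 h1) h2)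
      obtain ⟨⟨hp0, hp1⟩, hp2⟩ := hp
      simp only [Set.mem_compl_iff, Set.mem_preimage, Set.mem_singleton_iff] at hp0 hp1 hp2
      have hlt : lev (Nat.log m (f p.1 * m ^ p.2)) < 3 :=
        Nat.mod_lt _ (by omega)
      omega
    obtain ⟨i, hpre1⟩ := hexists
    have hpre2 : (fun p : ℕ × ℕ => Nat.log m (g p)) ⁻¹' (lev ⁻¹' {i}) ∈ w := by
      have e1 : (lev ⁻¹' {i}) ∈
          Ultrafilter.map (Nat.log m) (w.map (fun p : ℕ × ℕ => f p.1 * m ^ p.2)) := by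
        rw [Ultrafilter.mem_map, Ultrafilter.mem_map]
        exact hpre1
      rw [heq] at e1
      rw [Ultrafilter.mem_map, Ultrafilter.mem_map] at e1
      exact e1
    -- the homogeneous set
    obtain ⟨H, Hinf, hH⟩ := hw _ (winter (winter (winter hA hfz) hpre1) hpre2)
    obtain ⟨a, haH, hapos⟩ := Hinf.exists_gt 0
    set C1 := Nat.log m (h₁ a) with hC1def
    obtain ⟨b, hbH, hbN⟩ := Hinf.exists_gt
      (max (max a (Nat.log m (f a))) (max (m ^ (C1 + d)) (T 2)))
    have hab : a < b := by
      have := le_max_left (max a (Nat.log m (f a))) (max (m ^ (C1 + d)) (T 2))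
      have := le_max_left a (Nat.log m (f a))
      omega
    have hmem := hH a haH b hbH hab
    obtain ⟨⟨⟨⟨h1a, _⟩, hfa0⟩, hmem1⟩, hmem2⟩ := hmem
    simp only [Set.mem_compl_iff, Set.mem_setOf_eq] at hfa0
    have hfa1 : 1 ≤ f a := by omega
    have hb1 : 1 ≤ b := by omega
    obtain ⟨hh0, hlow, hup⟩ := hbounds a b h1a hb1
    set gb := g (a, b) with hgbdef
    have hgb1 : 1 ≤ gb := hgpos a b h1a hb1
    set x := Nat.log m gb with hxdef
    set s := Nat.log m (f a) with hsdef
    have hsb : s ≤ b := by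
      have := le_max_right a (Nat.log m (f a))
      have := le_max_left (max a (Nat.log m (f a))) (max (m ^ (C1 + d)) (T 2))
      omega
    have hbpow : m ^ (C1 + d) ≤ b := by
      have := le_max_left (m ^ (C1 + d)) (T 2)
      have := le_max_right (max a (Nat.log m (f a))) (max (m ^ (C1 + d)) (T 2))
      omega
    have hbT2 : T 2 < b := by
      have := le_max_right (m ^ (C1 + d)) (T 2)
      have := le_max_right (max a (Nat.log m (f a))) (max (m ^ (C1 + d)) (T 2))
      omega
    -- log of the exponential value is exactly s + b
    have hlogF : Nat.log m (f a * m ^ b) = s + b := by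
      apply Nat.log_eq_of_pow_le_of_lt_pow
      · rw [pow_add]
        exact Nat.mul_le_mul_right _ (Nat.pow_log_le_self m (by omega))
      · have h1 : f a < m ^ (s + 1) := Nat.lt_pow_succ_log_self hm1 (f a)
        calc f a * m ^ b < m ^ (s+1) * m ^ b := by
              exact (Nat.mul_lt_mul_right (pow_pos (by omega : 0 < m) b)).mpr h1
          _ = m ^ (s + b + 1) := by rw [← pow_add]; ring_nf
    set y := s + b with hydef
    have hyb : b ≤ y := by omega
    have hy0 : y ≠ 0 := by omega
    -- upper bound for log y
    have hlogy_le : Nat.log m y ≤ Nat.log m b + 1 := by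
      have h1 : y < m ^ (Nat.log m b + 2) := by
        have h2 : b < m ^ (Nat.log m b + 1) := Nat.lt_pow_succ_log_self hm1 b
        calc y ≤ 2 * b := by omega
          _ ≤ m * b := Nat.mul_le_mul_right _ hm
          _ < m * m ^ (Nat.log m b + 1) := by
              exact (Nat.mul_lt_mul_left (by omega)).mpr h2
          _ = m ^ (Nat.log m b + 2) := by ring
      have := Nat.log_lt_of_lt_pow hy0 h1
      omega
    have hlogb_le_logy : Nat.log m b ≤ Nat.log m y := Nat.log_mono_right hyb
    -- lower bound window : log b < d*(x+1)
    have hxlow : Nat.log m b < d * (x + 1) := by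
      have hb_le : b ≤ gb ^ d := by
        calc b = 1 * b := (one_mul b).symm
          _ ≤ h₀ a ^ d * b := by
              exact Nat.mul_le_mul_right _ (Nat.one_le_pow _ _ (by omega))
          _ ≤ gb ^ d := hlow
      have hgbp : gb < m ^ (x + 1) := Nat.lt_pow_succ_log_self hm1 gb
      have h2 : gb ^ d < m ^ (d * (x+1)) := by
        calc gb ^ d < (m ^ (x+1)) ^ d := Nat.pow_lt_pow_left hgbp hd0
          _ = m ^ (d * (x+1)) := by rw [← pow_mul, Nat.mul_comm]
      exact Nat.log_lt_of_lt_pow (by omega) (lt_of_le_of_lt hb_le h2)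
    -- upper bound window : x ≤ C1 + d*log b + d
    have hh1pos : 1 ≤ h₁ a := by
      by_contra hcon
      have : h₁ a = 0 := by omega
      rw [this, zero_mul] at hup
      omega
    have hxhi : x ≤ C1 + d * Nat.log m b + d := by
      have h1 : h₁ a < m ^ (C1 + 1) := Nat.lt_pow_succ_log_self hm1 (h₁ a)
      have h2 : b ^ d < m ^ (d * (Nat.log m b + 1)) := by
        calc b ^ d < (m ^ (Nat.log m b + 1)) ^ d :=
              Nat.pow_lt_pow_left (Nat.lt_pow_succ_log_self hm1 b) hd0
          _ = m ^ (d * (Nat.log m b + 1)) := by rw [← pow_mul, Nat.mul_comm]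
      have h3 : gb < m ^ (C1 + 1 + d * (Nat.log m b + 1)) := by
        calc gb ≤ h₁ a * b ^ d := hup
          _ < m ^ (C1+1) * m ^ (d * (Nat.log m b + 1)) := by
              apply Nat.mul_lt_mul_of_lt_of_le h1 (le_of_lt h2)
              positivity
          _ = m ^ (C1 + 1 + d * (Nat.log m b + 1)) := by rw [← pow_add]
      have h4 := Nat.log_lt_of_lt_pow (by omega : gb ≠ 0) h3
      have : d * (Nat.log m b + 1) = d * Nat.log m b + d := by ring
      omega
    have hClogb : C1 + d ≤ Nat.log m b := Nat.le_log_of_pow_le hm1 (by omega)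
    -- the two window inequalities
    have R1 : Nat.log m y ≤ K * (x + 1) := by
      have : d * (x+1) ≤ K * (x+1) := Nat.mul_le_mul_right _ (by omega)
      omega
    have R2 : x ≤ K * Nat.log m y := by
      have h1 : d * Nat.log m b ≤ d * Nat.log m y := Nat.mul_le_mul_left _ hlogb_le_logy
      have h2 : K * Nat.log m y = Nat.log m y + d * Nat.log m y := by rw [hKdef]; ring
      omega
    -- locate y in the tower
    set j := Nat.findGreatest (fun k => T k ≤ y) y with hjdef
    have ht0_2 : 2 ≤ t0 := by
      have h1 : 1 * 2 ≤ K * (2*(2*K*K*K)+2) := Nat.mul_le_mul hK1 (by omega)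
      omega
    have hT2t0 : t0 ≤ T 2 := (hfacts 2).1
    have h2y : 2 ≤ y := by omega
    have hT2y : T 2 ≤ y := by omega
    have hj2 : 2 ≤ j := Nat.le_findGreatest h2y hT2y
    have hjy : T j ≤ y :=
      Nat.findGreatest_spec (P := fun k => T k ≤ y) (m := 2) h2y hT2y
    have hyj1 : y < T (j + 1) := by
      by_contra hge
      push_neg at hge
      have hj1y : j + 1 ≤ y := le_trans hSM.le_apply hge
      exact (Nat.findGreatest_is_greatest (Nat.lt_succ_self j) hj1y) hge
    obtain ⟨k, hkj⟩ : ∃ k, j = k + 2 := ⟨j - 2, by omega⟩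
    -- (A) : x < T j
    have hTj1 : T (j+1) = m ^ (T j / K) := rfl
    have hxltTj : x < T j := by
      have h1 : Nat.log m y < T j / K :=
        Nat.log_lt_of_lt_pow hy0 (by rw [← hTj1]; exact hyj1)
      have h2 : K * (Nat.log m y + 1) ≤ K * (T j / K) :=
        Nat.mul_le_mul_left _ (by omega)
      have h3 : K * (T j / K) ≤ T j := by
        rw [Nat.mul_comm]; exact Nat.div_mul_le_self _ _
      have h4 : K * (Nat.log m y + 1) = K * Nat.log m y + K := by ring
      omega
    -- (B) : T k ≤ x
    have hTkx : T k ≤ x := by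
      have hTj2 : T (k+2) = m ^ (T (k+1) / K) := rfl
      have h1 : T (k+1) / K ≤ Nat.log m y := by
        apply Nat.le_log_of_pow_le hm1
        rw [← hTj2, ← hkj]; exact hjy
      have h2 : T (k+1) / K ≤ K * (x+1) := le_trans h1 R1
      have hdm := Nat.div_add_mod (T (k+1)) K
      have hmod : T (k+1) % K < K := Nat.mod_lt _ (by omega)
      have h3 : K * (T (k+1) / K) ≤ K * (K * (x+1)) := Nat.mul_le_mul_left _ h2
      have h4 : T (k+1) ≤ K * (K * (x+1)) + K := by omega
      have e1 : K * (K * (x+1)) = K*K*(x+1) := by ring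
      have e2 : 2*K*K*(x+1) = K*K*(x+1) + K*K*(x+1) := by ring
      have h51 : 1 ≤ K*(x+1) := Nat.one_le_iff_ne_zero.mpr (by positivity)
      have h52 : K * 1 ≤ K * (K*(x+1)) := Nat.mul_le_mul_left K h51
      have h5 : K * (K * (x+1)) + K ≤ 2*K*K*(x+1) := by omega
      have h6 : 2*K*K*(T k + 1) ≤ T (k+1) := (hfacts k).2
      have h7 : 2*K*K*(T k + 1) ≤ 2*K*K*(x+1) := by omega
      have h8 : T k + 1 ≤ x + 1 := Nat.le_of_mul_le_mul_left h7
        (Nat.mul_pos (Nat.mul_pos (by omega) (by omega : 0 < K)) (by omega : 0 < K))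
      omega
    -- colours
    have hlev_eval : ∀ n, lev n = Nat.findGreatest (fun k => T k ≤ n) n % 3 :=
      fun _ => rfl
    have hlevy : lev y = (k + 2) % 3 := by
      rw [hlev_eval, ← hjdef, hkj]
    have hlevx : lev x = k % 3 ∨ lev x = (k+1) % 3 := by
      by_cases hxk : x < T (k+1)
      · left
        rw [hlev_eval, rw_level_eq T hmono hTkx hxk]
      · right
        push_neg at hxk
        have hxtop : x < T (k+1+1) := by
          have hkk : k+1+1 = k+2 := rfl
          rw [hkk, ← hkj]; exact hxltTj
        rw [hlev_eval, rw_level_eq T hmono hxk hxtop]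
    simp only [Set.mem_preimage, Set.mem_singleton_iff] at hmem1 hmem2
    rw [hlogF] at hmem1
    -- hmem1 : lev y = i ; hmem2 : lev x = i
    have e1 : lev y = i := hmem1
    have e2 : lev x = i := hmem2
    rw [hlevy] at e1
    rcases hlevx with h | h <;> rw [h] at e2 <;> omega
end
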